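/- arXiv:0811.0977 — 2 statements merged into one kernel-verified Lean document; each statement's English description precedes it below -/
import Mathlib

section
/- (Three-component unnesting.) Let π : Set X × Set Y → Set X, ρ : Set X × Set Y → Set Y, and σ : Set X × Set Z → Set Z all be monotone in each argument. Define R∞(P) = lfp(R ↦ ρ(P,R)), P∞ = lfp(P ↦ π(P,R∞(P))), and S∞ = lfp(S ↦ σ(P∞,S)). Let (P*,R*,S*) be the least simultaneous fixed point of (P,R,S) ↦ (π(P,R), ρ(P,R), σ(P,S)). Then P* = P∞, R* = R∞(P*), and S* = S∞. -/
/-- A least fixed point of a monotone map is below every prefixed point. -/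
lemma least_le_prefixed {α : Type*} [CompleteLattice α] {f : α → α}
    (hf : Monotone f) {a : α} (ha : IsLeast {x | f x = x} a)
    {b : α} (hb : f b ≤ b) : a ≤ b := by
  have h1 : a ≤ OrderHom.lfp ⟨f, hf⟩ := ha.2 (OrderHom.map_lfp ⟨f, hf⟩)
  exact h1.trans (OrderHom.lfp_le _ hb)

theorem three_component_unnesting {X Y Z : Type*}
    (π : Set X × Set Y → Set X) (ρ : Set X × Set Y → Set Y)
    (σ : Set X × Set Z → Set Z)
    (hπ : Monotone π) (hρ : Monotone ρ) (hσ : Monotone σ)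
    (Rinf : Set X → Set Y)
    (hRinf : ∀ P, IsLeast {R | ρ (P, R) = R} (Rinf P))
    (Pinf : Set X) (hPinf : IsLeast {P | π (P, Rinf P) = P} Pinf)
    (Sinf : Set Z) (hSinf : IsLeast {S | σ (Pinf, S) = S} Sinf)
    (Pstar : Set X) (Rstar : Set Y) (Sstar : Set Z)
    (hstar : IsLeast
      {t : Set X × Set Y × Set Z |
        (π (t.1, t.2.1), ρ (t.1, t.2.1), σ (t.1, t.2.2)) = t}
      (Pstar, Rstar, Sstar)) :
    Pstar = Pinf ∧ Rstar = Rinf Pstar ∧ Sstar = Sinf := by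
  obtain ⟨hfix, hleast⟩ := hstar
  simp only [Set.mem_setOf_eq, Prod.mk.injEq] at hfix
  obtain ⟨hP, hR, hS⟩ := hfix
  have hρP : ∀ P, Monotone (fun R => ρ (P, R)) :=
    fun P R R' h => hρ ⟨le_rfl, h⟩
  have hσP : ∀ P, Monotone (fun S => σ (P, S)) :=
    fun P S S' h => hσ ⟨le_rfl, h⟩
  -- Rinf is monotone
  have hRmono : Monotone Rinf := by
    intro P P' hPP'
    refine least_le_prefixed (hρP P) (hRinf P) ?_
    calc ρ (P, Rinf P') ≤ ρ (P', Rinf P') := hρ ⟨hPP', le_rfl⟩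
      _ = Rinf P' := (hRinf P').1
  have hπR : Monotone (fun P => π (P, Rinf P)) :=
    fun P P' h => hπ ⟨h, hRmono h⟩
  -- (Pinf, Rinf Pinf, Sinf) is a fixed point of the triple map
  have htriple : (Pstar, Rstar, Sstar) ≤ (Pinf, Rinf Pinf, Sinf) := by
    apply hleast
    simp only [Set.mem_setOf_eq, Prod.mk.injEq]
    exact ⟨hPinf.1, (hRinf Pinf).1, hSinf.1⟩
  obtain ⟨h1, h2, h3⟩ := htriple
  -- Rinf Pstar ≤ Rstar
  have hRle : Rinf Pstar ≤ Rstar := (hRinf Pstar).2 hR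
  -- Pinf ≤ Pstar
  have hPle : Pinf ≤ Pstar := by
    refine least_le_prefixed hπR hPinf ?_
    calc π (Pstar, Rinf Pstar) ≤ π (Pstar, Rstar) := hπ ⟨le_rfl, hRle⟩
      _ = Pstar := hP
  have hPeq : Pstar = Pinf := le_antisymm h1 hPle
  have hReq : Rstar = Rinf Pstar := by
    refine le_antisymm ?_ hRle
    calc Rstar ≤ Rinf Pinf := h2
      _ = Rinf Pstar := by rw [hPeq]
  have hSeq : Sstar = Sinf := by
    refine le_antisymm h3 ?_
    refine least_le_prefixed (hσP Pinf) hSinf ?_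
    rw [← hPeq]
    exact le_of_eq hS
  exact ⟨hPeq, hReq, hSeq⟩
end

section
/- Fix x : ℕ and let Y = {(u,v) : ∀ w < u, w·v = x → (w = 1 ∨ w = x)}. Define the monotone operator Δ on Set (ℕ × ℕ) by Δ(X') = {(u,v) : v = 0 ∨ ∃ w, v = w+1 ∧ (u,w) ∈ X' ∧ (u,w) ∈ Y}. Then a natural number x > 1 satisfies (x,x) ∈ lfp Δ if and only if x is prime. -/
theorem prime_via_lfp (x : ℕ) (Δ : Set (ℕ × ℕ) → Set (ℕ × ℕ))
    (hΔ : Monotone Δ)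
    (hdef : ∀ X', Δ X' = {p : ℕ × ℕ | p.2 = 0 ∨
      ∃ w, p.2 = w + 1 ∧ (p.1, w) ∈ X' ∧
        (p.1, w) ∈ {q : ℕ × ℕ | ∀ w' < q.1, w' * q.2 = x → (w' = 1 ∨ w' = x)}})
    (hx : 1 < x) :
    (x, x) ∈ OrderHom.lfp ⟨Δ, hΔ⟩ ↔ Nat.Prime x := by
  set S : Set (ℕ × ℕ) :=
    {p : ℕ × ℕ | ∀ k < p.2, ∀ w' < p.1, w' * k = x → (w' = 1 ∨ w' = x)} with hS
  have hpre : Δ S ≤ S := by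
    intro p hp
    rw [hdef] at hp
    rcases hp with h0 | ⟨w, hw, hmem, hY⟩
    · intro k hk; omega
    · intro k hk w' hw' hmul
      rcases Nat.lt_succ_iff_lt_or_eq.mp (hw ▸ hk) with hlt | rfl
      · exact hmem k hlt w' hw' hmul
      · exact hY w' hw' hmul
  have hle : OrderHom.lfp ⟨Δ, hΔ⟩ ≤ S := OrderHom.lfp_le ⟨Δ, hΔ⟩ hpre
  constructor
  · intro hmem
    have hcond := hle hmem
    simp only [hS, Set.mem_setOf_eq] at hcond
    rw [Nat.prime_def_lt]
    refine ⟨hx, fun d hd hdvd => ?_⟩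
    rcases hdvd with ⟨k, hk⟩
    rcases eq_or_ne d 1 with rfl | hd1
    · rfl
    · have hd2 : 2 ≤ d := by
        rcases Nat.eq_zero_or_pos d with rfl | h
        · omega
        · omega
      have hk2 : k < x := by nlinarith [hk.symm]
      have := hcond k hk2 d hd (hk.symm)
      omega
  · intro hp
    have key : ∀ k, k ≤ x → (x, k) ∈ OrderHom.lfp ⟨Δ, hΔ⟩ := by
      intro k
      induction k with
      | zero =>
        intro _
        rw [← OrderHom.map_lfp ⟨Δ, hΔ⟩]
        show (x, 0) ∈ Δ _
        rw [hdef]; left; rfl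
      | succ n ih =>
        intro hn
        rw [← OrderHom.map_lfp ⟨Δ, hΔ⟩]
        show (x, n + 1) ∈ Δ _
        rw [hdef]
        right
        refine ⟨n, rfl, ih (by omega), ?_⟩
        intro w' hw' hmul
        left
        have hdvd : w' ∣ x := ⟨n, hmul.symm⟩
        rcases (Nat.Prime.eq_one_or_self_of_dvd hp w' hdvd) with h1 | h2
        · exact h1
        · omega
    exact key x le_rfl
end
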